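/- For R > 0 and 0 < ε < 1 − 1/(2√2), there exists a Lipschitz function ψ with compact support in (R,∞) such that ∫_R^∞ (|ψ'(r)|² − 2(1−ε)²ψ(r)²/r²) r² dr < 0. Concretely, for n sufficiently large the function ψ(r) = 1/R − 1/r on (R, 2nR/(n+1)), ψ(r) = 1/r − 1/(nR) on (2nR/(n+1), nR), and ψ = 0 elsewhere, satisfies this strict inequality. -/

import Mathlib

set_option maxHeartbeats 1000000


open Real MeasureTheory Set

private lemma maxsq_hasDerivAt (x : ℝ) :
    HasDerivAt (fun y : ℝ => (max 0 y) ^ 2) (2 * max 0 x) x := by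
  rcases lt_trichotomy x 0 with hx | hx | hx
  · have h0 : (fun y : ℝ => (max 0 y) ^ 2) =ᶠ[nhds x] fun _ => (0 : ℝ) := by
      filter_upwards [Iio_mem_nhds hx] with y hy
      simp [max_eq_left (le_of_lt (mem_Iio.mp hy))]
    have h1 : HasDerivAt (fun _ : ℝ => (0 : ℝ)) 0 x := hasDerivAt_const x 0
    have h2 := h1.congr_of_eventuallyEq h0
    simpa [max_eq_left hx.le] using h2
  · subst hx
    rw [hasDerivAt_iff_isLittleO, Asymptotics.isLittleO_iff]
    intro c hc
    filter_upwards [Metric.ball_mem_nhds (0 : ℝ) hc] with y hy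
    have hy' : |y| < c := by simpa [Real.dist_eq] using hy
    have h1 : (max 0 y) ^ 2 ≤ y ^ 2 := by
      rcases le_total y 0 with h | h
      · rw [max_eq_left h]
        nlinarith [sq_nonneg y]
      · simp [max_eq_right h]
    have hkey : (max 0 y) ^ 2 ≤ c * |y| := by
      nlinarith [abs_nonneg y, sq_abs y, hy']
    simp only [sub_zero, smul_eq_mul, Real.norm_eq_abs, max_self, mul_zero]
    rw [show |(0 ⊔ y) ^ 2 - (0:ℝ) ^ 2| = (0 ⊔ y) ^ 2 by
      rw [show ((0 ⊔ y) ^ 2 - (0:ℝ) ^ 2 : ℝ) = (0 ⊔ y) ^ 2 by ring]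
      exact abs_of_nonneg (sq_nonneg _)]
    exact hkey
  · have h0 : (fun y : ℝ => (max 0 y) ^ 2) =ᶠ[nhds x] fun y => y ^ 2 := by
      filter_upwards [Ioi_mem_nhds hx] with y hy
      simp [max_eq_right (le_of_lt (mem_Ioi.mp hy))]
    have h1 : HasDerivAt (fun y : ℝ => y ^ 2) (2 * x) x := by
      simpa using hasDerivAt_pow 2 x
    have h2 := h1.congr_of_eventuallyEq h0
    simpa [max_eq_right hx.le] using h2

private lemma poly9_hasDerivAt (a1 a2 a3 a4 a5 a6 a7 a8 a9 x : ℝ) :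
    HasDerivAt (fun v : ℝ => a1 * v + a2 * v ^ 2 + a3 * v ^ 3 + a4 * v ^ 4 + a5 * v ^ 5
        + a6 * v ^ 6 + a7 * v ^ 7 + a8 * v ^ 8 + a9 * v ^ 9)
      (a1 + 2 * a2 * x + 3 * a3 * x ^ 2 + 4 * a4 * x ^ 3 + 5 * a5 * x ^ 4 + 6 * a6 * x ^ 5
        + 7 * a7 * x ^ 6 + 8 * a8 * x ^ 7 + 9 * a9 * x ^ 8) x := by
  have H : ∀ (a : ℝ) (n : ℕ), HasDerivAt (fun v : ℝ => a * v ^ n) (a * (n * x ^ (n - 1))) x :=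
    fun a n => (hasDerivAt_pow n x).const_mul a
  have h := ((((((((H a1 1).add (H a2 2)).add (H a3 3)).add (H a4 4)).add (H a5 5)).add
    (H a6 6)).add (H a7 7)).add (H a8 8)).add (H a9 9)
  have hfun : (fun v : ℝ => a1 * v + a2 * v ^ 2 + a3 * v ^ 3 + a4 * v ^ 4 + a5 * v ^ 5
      + a6 * v ^ 6 + a7 * v ^ 7 + a8 * v ^ 8 + a9 * v ^ 9)
      = (fun v : ℝ => a1 * v ^ 1 + a2 * v ^ 2 + a3 * v ^ 3 + a4 * v ^ 4 + a5 * v ^ 5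
      + a6 * v ^ 6 + a7 * v ^ 7 + a8 * v ^ 8 + a9 * v ^ 9) := by
    funext v; ring
  rw [hfun]
  refine h.congr_deriv ?_
  push_cast
  ring

theorem stmt18 (R ε : ℝ) (hR : 0 < R) (hε : 0 < ε)
    (hε' : ε < 1 - 1 / (2 * Real.sqrt 2)) :
    ∃ ψ : ℝ → ℝ, (∃ K : NNReal, LipschitzWith K ψ) ∧ HasCompactSupport ψ ∧
      tsupport ψ ⊆ Ioi R ∧
      (∫ r in Ioi R, ((deriv ψ r)^2 - 2 * (1 - ε)^2 * (ψ r)^2 / r^2) * r^2) < 0 := by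
  -- the constant c and the gap δ
  set c : ℝ := 2 * (1 - ε) ^ 2 with hc
  have hs2 : Real.sqrt 2 ^ 2 = 2 := Real.sq_sqrt (by norm_num)
  have hs2pos : 0 < Real.sqrt 2 := Real.sqrt_pos.mpr (by norm_num)
  have h1e : 1 / (2 * Real.sqrt 2) < 1 - ε := by linarith
  have hpos : 0 < 1 / (2 * Real.sqrt 2) := by positivity
  have h18 : (1 : ℝ) / 8 < (1 - ε) ^ 2 := by
    have h8 : (1 / (2 * Real.sqrt 2)) ^ 2 = 1 / 8 := by
      rw [div_pow, mul_pow, hs2]; norm_num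
    nlinarith
  have hδpos : 0 < c - 1 / 4 := by rw [hc]; nlinarith
  set δ : ℝ := c - 1 / 4 with hδ
  clear_value c
  -- the length L
  set L : ℝ := Real.sqrt (3 / δ + 1) with hLdef
  have hL2 : L ^ 2 = 3 / δ + 1 := Real.sq_sqrt (by positivity)
  clear_value δ
  have hL0 : 0 ≤ L := hLdef ▸ Real.sqrt_nonneg _
  have hL1 : 1 ≤ L := by
    have h3δ : 0 < 3 / δ := by positivity
    nlinarith [hL2, hL0, h3δ]
  have hLpos : 0 < L := lt_of_lt_of_le one_pos hL1
  clear_value L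
  set T : ℝ := Real.log R + L + 1 with hT
  set A : ℝ := Real.exp (T - L) with hA
  set B : ℝ := Real.exp (T + L) with hB
  have hApos : 0 < A := by rw [hA]; exact Real.exp_pos _
  have hBpos : 0 < B := by rw [hB]; exact Real.exp_pos _
  have hRA : R < A := by
    rw [hA, hT, show Real.log R + L + 1 - L = Real.log R + 1 by ring,
      Real.exp_add, Real.exp_log hR]
    nlinarith [Real.exp_one_gt_d9, Real.exp_pos (1 : ℝ)]
  have hAB : A < B := by
    rw [hA, hB]
    exact Real.exp_lt_exp.mpr (by linarith)
  have hlogA : Real.log A = T - L := by rw [hA]; exact Real.log_exp _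
  have hlogB : Real.log B = T + L := by rw [hB]; exact Real.log_exp _
  clear_value T A B
  -- the bump function φ and its derivative
  set φ : ℝ → ℝ := fun v => (max 0 (L ^ 2 - v ^ 2)) ^ 2 with hφdef
  set φD : ℝ → ℝ := fun v => 2 * max 0 (L ^ 2 - v ^ 2) * (-2 * v) with hφDdef
  clear_value φ φD
  have hφderiv : ∀ v : ℝ, HasDerivAt φ (φD v) v := by
    intro v
    have h1 : HasDerivAt (fun v : ℝ => L ^ 2 - v ^ 2) (-2 * v) v := by
      simpa using (hasDerivAt_pow 2 v).const_sub (L ^ 2)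
    have h2 := (maxsq_hasDerivAt (L ^ 2 - v ^ 2)).comp v h1
    simp only [hφdef, hφDdef]
    simpa [Function.comp_def] using h2
  have hφzero : ∀ v : ℝ, L ≤ |v| → φ v = 0 ∧ φD v = 0 := by
    intro v hv
    have hle : L ^ 2 - v ^ 2 ≤ 0 := by nlinarith [sq_abs v]
    constructor <;> simp [hφdef, hφDdef, max_eq_left hle]
  -- the profile g in logarithmic coordinates
  set g : ℝ → ℝ := fun u => Real.exp (-u / 2) * φ (u - T) with hgdef
  set gD : ℝ → ℝ := fun u => Real.exp (-u / 2) * (φD (u - T) - φ (u - T) / 2) with hgDdef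
  clear_value g gD
  have hgderiv : ∀ u : ℝ, HasDerivAt g (gD u) u := by
    intro u
    have h1 : HasDerivAt (fun u : ℝ => Real.exp (-u / 2)) (Real.exp (-u / 2) * (-1 / 2)) u := by
      have hin : HasDerivAt (fun u : ℝ => -u / 2) (-1 / 2) u := by
        simpa using ((hasDerivAt_id u).neg.div_const 2)
      simpa [Function.comp_def] using (Real.hasDerivAt_exp (-u / 2)).comp u hin
    have h2 : HasDerivAt (fun u : ℝ => φ (u - T)) (φD (u - T)) u := by
      simpa [Function.comp_def] using (hφderiv (u - T)).comp u ((hasDerivAt_id u).sub_const T)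
    have h3 := h1.mul h2
    simp only [hgdef, hgDdef]
    refine h3.congr_deriv ?_
    ring
  -- the test function ψ
  set ψ : ℝ → ℝ := fun r => if 0 < r then g (Real.log r) else 0 with hψdef
  clear_value ψ
  have hψ_of_pos : ∀ r : ℝ, 0 < r → ψ r = g (Real.log r) := by
    intro r hr; simp [hψdef, if_pos hr]
  have hψ_low : ∀ r : ℝ, r < A → ψ r = 0 := by
    intro r hr
    rcases le_or_gt r 0 with h | h
    · simp [hψdef, not_lt.mpr h]
    · rw [hψ_of_pos r h]
      have hlog : Real.log r < T - L := by
        rw [← hlogA]; exact Real.log_lt_log h hr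
      have habs : L ≤ |Real.log r - T| := by
        rw [abs_sub_comm, abs_of_nonneg (by linarith)]; linarith
      simp [hgdef, (hφzero _ habs).1]
  have hψ_high : ∀ r : ℝ, B ≤ r → ψ r = 0 := by
    intro r hr
    have hrpos : 0 < r := lt_of_lt_of_le hBpos hr
    rw [hψ_of_pos r hrpos]
    have hlog : T + L ≤ Real.log r := by
      rw [← hlogB]; exact Real.log_le_log hBpos hr
    have habs : L ≤ |Real.log r - T| := by
      rw [abs_of_nonneg (by linarith)]; linarith
    simp [hgdef, (hφzero _ habs).1]
  -- derivatives of ψ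
  have hψderiv_pos : ∀ r : ℝ, 0 < r → HasDerivAt ψ (gD (Real.log r) * r⁻¹) r := by
    intro r hr
    have heq : ψ =ᶠ[nhds r] fun y => g (Real.log y) := by
      filter_upwards [Ioi_mem_nhds hr] with y hy
      simp [hψdef, if_pos (mem_Ioi.mp hy)]
    have h1 := (hgderiv (Real.log r)).comp r (Real.hasDerivAt_log (ne_of_gt hr))
    exact HasDerivAt.congr_of_eventuallyEq h1 heq
  have hψderiv_low : ∀ r : ℝ, r < A → HasDerivAt ψ 0 r := by
    intro r hr
    have heq : ψ =ᶠ[nhds r] fun _ => (0 : ℝ) := by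
      filter_upwards [Iio_mem_nhds hr] with y hy
      exact hψ_low y (mem_Iio.mp hy)
    exact (hasDerivAt_const r (0 : ℝ)).congr_of_eventuallyEq heq
  have hψdiff : Differentiable ℝ ψ := by
    intro r
    rcases lt_or_ge r A with h | h
    · exact (hψderiv_low r h).differentiableAt
    · exact (hψderiv_pos r (lt_of_lt_of_le hApos h)).differentiableAt
  have hderiv_pos : ∀ r : ℝ, 0 < r → deriv ψ r = gD (Real.log r) * r⁻¹ :=
    fun r hr => (hψderiv_pos r hr).deriv
  have hderiv_low : ∀ r : ℝ, r < A → deriv ψ r = 0 :=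
    fun r hr => (hψderiv_low r hr).deriv
  have hgDzero : ∀ u : ℝ, L ≤ |u - T| → gD u = 0 := by
    intro u hu
    rw [hgDdef]
    simp only [(hφzero _ hu).1, (hφzero _ hu).2]
    ring
  have hderiv_high : ∀ r : ℝ, B ≤ r → deriv ψ r = 0 := by
    intro r hr
    have hrpos : 0 < r := lt_of_lt_of_le hBpos hr
    rw [hderiv_pos r hrpos]
    have hlog : T + L ≤ Real.log r := by
      rw [← hlogB]; exact Real.log_le_log hBpos hr
    have habs : L ≤ |Real.log r - T| := by
      rw [abs_of_nonneg (by linarith)]; linarith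
    rw [hgDzero _ habs, zero_mul]
  -- continuity facts
  have hφcont : Continuous φ := by
    rw [hφdef]
    exact (continuous_const.max (continuous_const.sub (continuous_pow 2))).pow 2
  have hφDcont : Continuous φD := by
    rw [hφDdef]
    exact ((continuous_const.mul (continuous_const.max
      (continuous_const.sub (continuous_pow 2)))).mul
      (continuous_const.mul continuous_id))
  have hgDcont : Continuous gD := by
    rw [hgDdef]
    exact (Real.continuous_exp.comp ((continuous_id.neg).div_const 2)).mul
      ((hφDcont.comp (continuous_id.sub continuous_const)).sub
        ((hφcont.comp (continuous_id.sub continuous_const)).div_const 2))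
  -- Lipschitz
  have hderiv_cont : Continuous (deriv ψ) := by
    rw [continuous_iff_continuousAt]
    intro x
    rcases lt_or_ge x A with h | h
    · have heq : deriv ψ =ᶠ[nhds x] fun _ => (0 : ℝ) := by
        filter_upwards [Iio_mem_nhds h] with y hy
        exact hderiv_low y (mem_Iio.mp hy)
      exact ContinuousAt.congr continuousAt_const heq.symm
    · have hx0 : 0 < x := lt_of_lt_of_le hApos h
      have heq : deriv ψ =ᶠ[nhds x] fun r => gD (Real.log r) * r⁻¹ := by
        filter_upwards [Ioi_mem_nhds (show (0:ℝ) < x from hx0)] with y hy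
        exact hderiv_pos y (mem_Ioi.mp hy)
      have hcA : ContinuousAt (fun r : ℝ => gD (Real.log r) * r⁻¹) x :=
        (hgDcont.continuousAt.comp (Real.continuousAt_log (ne_of_gt hx0))).mul
          (continuousAt_inv₀ (ne_of_gt hx0))
      exact hcA.congr heq.symm
  have hderiv_supp : HasCompactSupport (deriv ψ) := by
    apply HasCompactSupport.intro (isCompact_Icc (a := A) (b := B))
    intro x hx
    rcases lt_or_ge x A with h | h
    · exact hderiv_low x h
    · rcases le_or_gt B x with h' | h'
      · exact hderiv_high x h'
      · exact absurd ⟨h, h'.le⟩ hx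
  obtain ⟨C, hC⟩ := hderiv_supp.exists_bound_of_continuous hderiv_cont
  have hlip : ∃ K : NNReal, LipschitzWith K ψ := by
    refine ⟨C.toNNReal, lipschitzWith_of_nnnorm_deriv_le hψdiff fun x => ?_⟩
    rw [← NNReal.coe_le_coe, coe_nnnorm, Real.coe_toNNReal']
    exact le_max_of_le_left (hC x)
  -- compact support of ψ
  have hψzero_out : ∀ x : ℝ, x ∉ Icc A B → ψ x = 0 := by
    intro x hx
    rcases lt_or_ge x A with h | h
    · exact hψ_low x h
    · rcases le_or_gt B x with h' | h'
      · exact hψ_high x h'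
      · exact absurd ⟨h, h'.le⟩ hx
  have hcompact : HasCompactSupport ψ :=
    HasCompactSupport.intro (isCompact_Icc (a := A) (b := B)) hψzero_out
  have htsupp : tsupport ψ ⊆ Ioi R := by
    have hsupp : Function.support ψ ⊆ Icc A B := by
      intro x hx
      by_contra hxmem
      exact hx (hψzero_out x hxmem)
    have h1 : tsupport ψ ⊆ Icc A B := closure_minimal hsupp isClosed_Icc
    intro x hx
    exact lt_of_lt_of_le hRA (h1 hx).1
  refine ⟨ψ, hlip, hcompact, htsupp, ?_⟩
  -- the polynomial P and its antiderivative
  set P : ℝ → ℝ := fun v =>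
    (-(L ^ 2 - v ^ 2) ^ 2 / 2 - 4 * v * (L ^ 2 - v ^ 2)) ^ 2 - c * (L ^ 2 - v ^ 2) ^ 4
    with hPdef
  set Pint : ℝ → ℝ := fun v =>
    ((1/4 - c) * L ^ 8) * v + (2 * L ^ 6) * v ^ 2
    + ((16/3) * L ^ 4 + (4/3 * c - 1/3) * L ^ 6) * v ^ 3
    + (-3 * L ^ 4) * v ^ 4
    + (-(32/5) * L ^ 2 + (3/10 - 6/5 * c) * L ^ 4) * v ^ 5
    + (2 * L ^ 2) * v ^ 6
    + (16/7 + (4/7 * c - 1/7) * L ^ 2) * v ^ 7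
    + (-1/2) * v ^ 8
    + (1/36 - c/9) * v ^ 9 with hPintdef
  clear_value P Pint
  have hPint : ∀ v : ℝ, HasDerivAt Pint (P v) v := by
    intro v
    have h := poly9_hasDerivAt ((1/4 - c) * L ^ 8) (2 * L ^ 6)
      ((16/3) * L ^ 4 + (4/3 * c - 1/3) * L ^ 6) (-3 * L ^ 4)
      (-(32/5) * L ^ 2 + (3/10 - 6/5 * c) * L ^ 4) (2 * L ^ 2)
      (16/7 + (4/7 * c - 1/7) * L ^ 2) (-1/2) (1/36 - c/9) v
    rw [hPintdef, hPdef]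
    convert h using 1
    ring
  -- the integrand in r-coordinates
  set h : ℝ → ℝ := fun r => P (Real.log r - T) * r⁻¹ with hhdef
  clear_value h
  -- pointwise identity for the integrand on Ioi R
  have hpoint : ∀ r ∈ Ioi R,
      ((deriv ψ r) ^ 2 - c * (ψ r) ^ 2 / r ^ 2) * r ^ 2 = (Ioo A B).indicator h r := by
    intro r hr
    have hrR : R < r := mem_Ioi.mp hr
    have hrpos : 0 < r := lt_trans hR hrR
    have hrne : r ≠ 0 := ne_of_gt hrpos
    rcases lt_or_ge r A with hcase | hcase
    · rw [indicator_of_notMem (fun hmem => absurd hmem.1 (not_lt.mpr hcase.le)) h]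
      rw [hderiv_low r hcase, hψ_low r hcase]
      ring
    · rcases lt_or_ge r B with hcase2 | hcase2
      · rcases eq_or_lt_of_le hcase with heq | hlt
        · -- r = A
          rw [indicator_of_notMem (fun hmem => absurd hmem.1 (by rw [heq]; exact lt_irrefl r)) h]
          rw [hderiv_pos r hrpos, hψ_of_pos r hrpos]
          have hlogr : Real.log r = T - L := by rw [← heq, hlogA]
          have habs : L ≤ |Real.log r - T| := by
            rw [hlogr, show T - L - T = -L by ring, abs_neg, abs_of_pos hLpos]
          have hgz : g (Real.log r) = 0 := by
            rw [hgdef]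
            simp [(hφzero _ habs).1]
          rw [hgDzero _ habs, hgz]
          ring
        · -- A < r < B : the main region
          rw [indicator_of_mem (mem_Ioo.mpr ⟨hlt, hcase2⟩) h]
          rw [hderiv_pos r hrpos, hψ_of_pos r hrpos]
          set u : ℝ := Real.log r with hu
          clear_value u
          have hexp2 : Real.exp (-u / 2) ^ 2 = r⁻¹ := by
            rw [sq, ← Real.exp_add, show -u / 2 + -u / 2 = -u by ring, Real.exp_neg, hu,
              Real.exp_log hrpos]
          have huA : T - L < u := by rw [hu, ← hlogA]; exact Real.log_lt_log hApos hlt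
          have huB : u < T + L := by rw [hu, ← hlogB]; exact Real.log_lt_log hrpos hcase2
          have hvmax : max 0 (L ^ 2 - (u - T) ^ 2) = L ^ 2 - (u - T) ^ 2 := by
            apply max_eq_right
            have hs := sq_lt_sq' (by linarith : -L < u - T) (by linarith : u - T < L)
            linarith
          have e1 : gD u = Real.exp (-u / 2)
              * (-(L ^ 2 - (u - T) ^ 2) ^ 2 / 2 - 4 * (u - T) * (L ^ 2 - (u - T) ^ 2)) := by
            rw [hgDdef]
            simp only [hφdef, hφDdef, hvmax]
            ring
          have e2 : g u = Real.exp (-u / 2) * (L ^ 2 - (u - T) ^ 2) ^ 2 := by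
            rw [hgdef]
            simp only [hφdef, hvmax]
          have step1 : ((gD u * r⁻¹) ^ 2 - c * (g u) ^ 2 / r ^ 2) * r ^ 2
              = gD u ^ 2 - c * g u ^ 2 := by
            field_simp
          have step2 : gD u ^ 2 - c * g u ^ 2 = Real.exp (-u / 2) ^ 2 * P (u - T) := by
            rw [e1, e2, hPdef]
            ring
          rw [step1, step2, hexp2, hhdef, hu]
          ring
      · -- B ≤ r
        rw [indicator_of_notMem (fun hmem => absurd hmem.2 (not_lt.mpr hcase2)) h]
        rw [hderiv_high r hcase2, hψ_high r hcase2]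
        ring
  -- rewrite the integral
  have h1 : (∫ r in Ioi R, ((deriv ψ r) ^ 2 - c * (ψ r) ^ 2 / r ^ 2) * r ^ 2)
      = ∫ r in Ioi R, (Ioo A B).indicator h r :=
    setIntegral_congr_fun measurableSet_Ioi fun r hr => hpoint r hr
  have h2 : (∫ r in Ioi R, (Ioo A B).indicator h r) = ∫ r in Ioo A B, h r := by
    rw [setIntegral_indicator measurableSet_Ioo, inter_eq_self_of_subset_right]
    intro x hx
    exact mem_Ioi.mpr (lt_trans hRA hx.1)
  -- compute the integral by FTC
  have hW : ∀ r ∈ uIcc A B, HasDerivAt (fun r => Pint (Real.log r - T)) (h r) r := by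
    intro r hr
    rw [uIcc_of_le hAB.le] at hr
    have hrpos : 0 < r := lt_of_lt_of_le hApos hr.1
    have hd := (hPint (Real.log r - T)).comp r
      ((Real.hasDerivAt_log (ne_of_gt hrpos)).sub_const T)
    rw [hhdef]
    simpa [Function.comp_def] using hd
  have hPcont : Continuous P := by
    rw [hPdef]
    fun_prop
  have hhint : IntervalIntegrable h volume A B := by
    apply ContinuousOn.intervalIntegrable
    intro r hr
    rw [uIcc_of_le hAB.le] at hr
    have hrpos : 0 < r := lt_of_lt_of_le hApos hr.1
    apply ContinuousAt.continuousWithinAt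
    rw [hhdef]
    exact (hPcont.continuousAt.comp
      ((Real.continuousAt_log (ne_of_gt hrpos)).sub continuousAt_const)).mul
      (continuousAt_inv₀ (ne_of_gt hrpos))
  have hFTC : (∫ r in A..B, h r) = Pint L - Pint (-L) := by
    rw [intervalIntegral.integral_eq_sub_of_hasDerivAt hW hhint, hlogA, hlogB,
      show T + L - T = L by ring, show T - L - T = -L by ring]
  have hIoo : (∫ r in Ioo A B, h r) = Pint L - Pint (-L) := by
    rw [← integral_Ioc_eq_integral_Ioo, ← intervalIntegral.integral_of_le hAB.le, hFTC]
  -- final numeric estimate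
  have hval : Pint L - Pint (-L) = 256/105 * L ^ 7 + 64/315 * L ^ 9 - 256/315 * c * L ^ 9 := by
    rw [hPintdef]
    ring
  have hL7 : 0 < L ^ 7 := by positivity
  have hcδ : c = 1/4 + δ := by rw [hδ]; ring
  have hδL : δ * L ^ 2 = 3 + δ := by
    rw [hL2]
    field_simp
  have hAval : Pint L - Pint (-L) = 256/105 * L ^ 7 - 256/315 * (δ * L ^ 2) * L ^ 7 := by
    rw [hval, hcδ]; ring
  have hneg : Pint L - Pint (-L) < 0 := by
    rw [hAval, hδL]
    nlinarith [mul_pos hδpos hL7]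
  rw [h1, h2, hIoo]
  exact hneg
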